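/- Cayley's identity: for every n ≥ 1 and every integer s ≥ 1, applying the differential operator det(∂) := det( (∂/∂x_{ij})_{1≤i,j≤n} ) (the determinant of the matrix of partial-derivative operators, expanded by the Leibniz formula over permutations with signs) to the polynomial det(X)^s in the n² variables x_{ij} yields s(s+1)(s+2)⋯(s+n−1) · det(X)^{s−1}. -/

import Mathlib

open MvPolynomial

/-- The differential operator `det(∂) = ∑_{σ ∈ S_n} sgn(σ) ∏_i ∂/∂x_{i,σ(i)}`
acting on polynomials in the `n²` variables `x_{ij}`. -/
noncomputable def detDeriv (n : ℕ) :
    Module.End ℚ (MvPolynomial (Fin n × Fin n) ℚ) :=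
  ∑ σ : Equiv.Perm (Fin n),
    ((Equiv.Perm.sign σ : ℤ) : ℚ) •
      (List.ofFn fun i : Fin n =>
        ((MvPolynomial.pderiv (i, σ i)).toLinearMap :
          Module.End ℚ (MvPolynomial (Fin n × Fin n) ℚ))).prod

/-- The generic `n×n` matrix of variables. -/
noncomputable def genericMatrix (n : ℕ) :
    Matrix (Fin n) (Fin n) (MvPolynomial (Fin n × Fin n) ℚ) :=
  Matrix.of fun i j => MvPolynomial.X (i, j)

open Matrix

lemma pderiv_pderiv' {σ : Type*} [DecidableEq σ] (i j : σ) (p : MvPolynomial σ ℚ) :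
    pderiv i (pderiv j p) = pderiv j (pderiv i p) := by
  induction p using MvPolynomial.induction_on' with
  | monomial s a =>
    rcases eq_or_ne i j with rfl | hij
    · rfl
    · simp only [pderiv_monomial]
      rw [tsub_right_comm]
      congr 1
      rw [Finsupp.tsub_apply, Finsupp.tsub_apply, Finsupp.single_eq_of_ne hij,
        Finsupp.single_eq_of_ne (Ne.symm hij)]
      simp only [Nat.sub_zero]
      push_cast
      ring
  | add p q hp hq => simp [hp, hq]

noncomputable def pdE (n : ℕ) (p : Fin n × Fin n) :
    Module.End ℚ (MvPolynomial (Fin n × Fin n) ℚ) := (pderiv p).toLinearMap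

lemma pdE_comm (n : ℕ) : ∀ a ∈ Set.range (pdE n), ∀ b ∈ Set.range (pdE n), a * b = b * a := by
  rintro _ ⟨p, rfl⟩ _ ⟨q, rfl⟩
  refine LinearMap.ext fun x => ?_
  simp only [Module.End.mul_apply]
  exact pderiv_pderiv' p q x

noncomputable instance adjComm (n : ℕ) : CommRing ↥(Algebra.adjoin ℚ (Set.range (pdE n))) :=
  Algebra.adjoinCommRingOfComm ℚ (pdE_comm n)

noncomputable def psiAlg (n : ℕ) :
    MvPolynomial (Fin n × Fin n) ℚ →ₐ[ℚ] Module.End ℚ (MvPolynomial (Fin n × Fin n) ℚ) :=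
  ((Algebra.adjoin ℚ (Set.range (pdE n))).val).comp
    (aeval fun p => (⟨pdE n p, Algebra.subset_adjoin ⟨p, rfl⟩⟩ :
      ↥(Algebra.adjoin ℚ (Set.range (pdE n)))))

@[simp] lemma psiAlg_X (n : ℕ) (p : Fin n × Fin n) :
    psiAlg n (X p) = pdE n p := by
  simp [psiAlg]

lemma psiAlg_mul_apply (n : ℕ) (p q g : MvPolynomial (Fin n × Fin n) ℚ) :
    psiAlg n (p * q) g = psiAlg n p (psiAlg n q g) := by
  rw [_root_.map_mul]; rfl

lemma psiAlg_prod (n : ℕ) (m : ℕ) (g : Fin m → Fin n × Fin n) :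
    psiAlg n (∏ i, X (g i)) = (List.ofFn fun i => pdE n (g i)).prod := by
  rw [← List.prod_ofFn, map_list_prod, List.map_ofFn]
  refine congrArg List.prod (congrArg List.ofFn (funext fun i => ?_))
  simp [Function.comp]

lemma detDeriv_eq (n : ℕ) : detDeriv n = psiAlg n (genericMatrix n).det := by
  rw [← Matrix.det_transpose, Matrix.det_apply, map_sum]
  unfold detDeriv
  congr 1
  funext σ
  have : ∏ i, (genericMatrix n)ᵀ (σ i) i = ∏ i, X (i, σ i) := by
    apply Finset.prod_congr rfl
    intro i _
    rfl
  rw [Units.smul_def, map_zsmul, this, psiAlg_prod]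
  rw [← Int.cast_smul_eq_zsmul ℚ]
  rfl

section
variable {A : Type*} [CommRing A] [Algebra ℚ A]

lemma derivation_finset_prod (D : Derivation ℚ A A) {ι : Type*} [DecidableEq ι]
    (t : Finset ι) (g : ι → A) :
    D (∏ i ∈ t, g i) = ∑ i ∈ t, D (g i) * ∏ j ∈ t.erase i, g j := by
  induction t using Finset.induction_on with
  | empty => simp
  | insert a t ha ih =>
    rw [Finset.prod_insert ha, D.leibniz, smul_eq_mul, smul_eq_mul, Finset.sum_insert ha,
      Finset.erase_insert ha, ih, Finset.mul_sum]
    rw [add_comm]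
    congr 1
    · ring
    · refine Finset.sum_congr rfl fun i hi => ?_
      rw [Finset.erase_insert_of_ne (by rintro rfl; exact ha hi), Finset.prod_insert
        (fun h => ha (Finset.mem_of_mem_erase h))]
      ring

lemma derivation_det_col (D : Derivation ℚ A A) {m : ℕ} (M : Matrix (Fin m) (Fin m) A) :
    D M.det = ∑ c, (M.updateCol c (fun i => D (M i c))).det := by
  classical
  have hD : ∀ (z : ℤ) (x : A), D ((z : A) * x) = (z : A) * D x := fun z x => by
    rw [← zsmul_eq_mul, ← zsmul_eq_mul, map_zsmul]
  rw [Matrix.det_apply', map_sum]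
  have key : ∀ σ : Equiv.Perm (Fin m),
      D (((Equiv.Perm.sign σ : ℤ) : A) * ∏ i, M (σ i) i)
        = ∑ c, ((Equiv.Perm.sign σ : ℤ) : A) *
            (D (M (σ c) c) * ∏ j ∈ Finset.univ.erase c, M (σ j) j) := by
    intro σ
    rw [hD, derivation_finset_prod, Finset.mul_sum]
  rw [Finset.sum_congr rfl fun σ _ => key σ, Finset.sum_comm]
  refine Finset.sum_congr rfl fun c _ => ?_
  rw [Matrix.det_apply']
  refine Finset.sum_congr rfl fun σ _ => ?_
  congr 1
  have h1 : ∀ j, (M.updateCol c fun i => D (M i c)) (σ j) j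
      = if j = c then D (M (σ j) c) else M (σ j) j := by
    intro j
    rw [Matrix.updateCol_apply]
  rw [Finset.prod_congr rfl fun j _ => h1 j,
    ← Finset.mul_prod_erase Finset.univ _ (Finset.mem_univ c), if_pos rfl]
  congr 1
  refine Finset.prod_congr rfl fun j hj => ?_
  rw [if_neg (Finset.ne_of_mem_erase hj)]

end

section
variable {n : ℕ}

lemma pderiv_generic (p : Fin n × Fin n) (i j : Fin n) :
    pderiv p (genericMatrix n i j) = if (i, j) = p then 1 else 0 := by
  rcases eq_or_ne ((i, j)) p with h | h
  · rw [if_pos h]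
    exact h ▸ pderiv_X_self (i, j)
  · rw [if_neg h]
    exact pderiv_X_of_ne h

lemma pderiv_det_generic (a b : Fin n) :
    pderiv (a, b) (genericMatrix n).det = (genericMatrix n).adjugate b a := by
  classical
  rw [derivation_det_col (pderiv (a, b)) (genericMatrix n)]
  rw [Finset.sum_eq_single b]
  · have hcol : (fun i => pderiv (a, b) (genericMatrix n i b)) = Pi.single a 1 := by
      funext i
      rw [pderiv_generic]
      rcases eq_or_ne i a with rfl | h
      · simp
      · rw [if_neg (by simp [Prod.ext_iff, h]), Pi.single_eq_of_ne h]
    rw [hcol, ← Matrix.det_transpose, ← Matrix.updateRow_transpose,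
      ← Matrix.adjugate_apply, ← Matrix.adjugate_transpose, Matrix.transpose_apply]
  · intro c _ hc
    apply Matrix.det_eq_zero_of_column_eq_zero c
    intro i
    rw [Matrix.updateCol_self, pderiv_generic, if_neg (by simp [Prod.ext_iff, hc])]
  · intro h
    exact absurd (Finset.mem_univ b) h

lemma f_mul_pderiv_adjugate (a b c d : Fin n) :
    (genericMatrix n).det * pderiv (a, b) ((genericMatrix n).adjugate c d)
      = (genericMatrix n).adjugate b a * (genericMatrix n).adjugate c d
        - (genericMatrix n).adjugate c a * (genericMatrix n).adjugate b d := by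
  classical
  set Xm := genericMatrix n with hXm
  set Y := Xm.adjugate with hYdef
  set f := Xm.det with hf
  have hE : ∀ i j, (if i = a then Y b j else 0)
      + ∑ k, Xm i k * pderiv ((a, b) : Fin n × Fin n) (Y k j)
      = (if i = j then Y b a else 0) := by
    intro i j
    have h0 : (∑ k, Xm i k * Y k j) = f * (1 : Matrix (Fin n) (Fin n) _) i j := by
      rw [← Matrix.mul_apply, Matrix.mul_adjugate, Matrix.smul_apply, smul_eq_mul]
    have h1 := congrArg (pderiv ((a, b) : Fin n × Fin n)) h0
    rw [map_sum] at h1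
    have h2 : ∀ k : Fin n, pderiv ((a, b) : Fin n × Fin n) (Xm i k * Y k j)
        = (if (i, k) = (a, b) then 1 else 0) * Y k j
          + Xm i k * pderiv ((a, b) : Fin n × Fin n) (Y k j) := by
      intro k
      rw [pderiv_mul, pderiv_generic]
    rw [Finset.sum_congr rfl fun k _ => h2 k, Finset.sum_add_distrib] at h1
    have h3 : (∑ k, (if ((i : Fin n), (k : Fin n)) = (a, b) then
          (1 : MvPolynomial (Fin n × Fin n) ℚ) else 0) * Y k j)
        = if i = a then Y b j else 0 := by
      rcases eq_or_ne i a with rfl | h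
      · rw [if_pos rfl, Finset.sum_eq_single b]
        · simp
        · intro k _ hk; rw [if_neg (by simp [Prod.ext_iff, hk]), zero_mul]
        · intro h; exact absurd (Finset.mem_univ b) h
      · rw [if_neg h]
        apply Finset.sum_eq_zero
        intro k _
        rw [if_neg (by simp [Prod.ext_iff, h]), zero_mul]
    rw [h3] at h1
    have h4 : pderiv ((a, b) : Fin n × Fin n) (f * (1 : Matrix (Fin n) (Fin n) _) i j)
        = if i = j then Y b a else 0 := by
      rcases eq_or_ne i j with rfl | h
      · rw [Matrix.one_apply_eq, mul_one, if_pos rfl, hf, hXm, pderiv_det_generic]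
      · rw [Matrix.one_apply_ne h, mul_zero, map_zero, if_neg h]
    rw [h4] at h1
    exact h1
  have h6 : (∑ i, Y c i * ((if i = a then Y b d else 0)
        + ∑ k, Xm i k * pderiv ((a, b) : Fin n × Fin n) (Y k d)))
      = ∑ i, Y c i * (if i = d then Y b a else 0) :=
    Finset.sum_congr rfl fun i _ => by rw [hE i d]
  have hL1 : (∑ i, Y c i * (if i = a then Y b d else 0)) = Y c a * Y b d := by
    rw [Finset.sum_eq_single a]
    · rw [if_pos rfl]
    · intro i _ hi; rw [if_neg hi, mul_zero]
    · intro h; exact absurd (Finset.mem_univ a) h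
  have hR : (∑ i, Y c i * (if i = d then Y b a else 0)) = Y c d * Y b a := by
    rw [Finset.sum_eq_single d]
    · rw [if_pos rfl]
    · intro i _ hi; rw [if_neg hi, mul_zero]
    · intro h; exact absurd (Finset.mem_univ d) h
  have hL2 : (∑ i, Y c i * ∑ k, Xm i k * pderiv ((a, b) : Fin n × Fin n) (Y k d))
      = f * pderiv ((a, b) : Fin n × Fin n) (Y c d) := by
    have e1 : ∀ i, Y c i * ∑ k, Xm i k * pderiv ((a, b) : Fin n × Fin n) (Y k d)
        = ∑ k, Y c i * Xm i k * pderiv ((a, b) : Fin n × Fin n) (Y k d) := by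
      intro i
      rw [Finset.mul_sum]
      exact Finset.sum_congr rfl fun k _ => by ring
    rw [Finset.sum_congr rfl fun i _ => e1 i, Finset.sum_comm]
    have e2 : ∀ k, (∑ i, Y c i * Xm i k * pderiv ((a, b) : Fin n × Fin n) (Y k d))
        = (f * (1 : Matrix (Fin n) (Fin n) _) c k) * pderiv ((a, b) : Fin n × Fin n) (Y k d) := by
      intro k
      rw [← Finset.sum_mul, ← Matrix.mul_apply, Matrix.adjugate_mul, Matrix.smul_apply, smul_eq_mul]
    rw [Finset.sum_congr rfl fun k _ => e2 k, Finset.sum_eq_single c]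
    · rw [Matrix.one_apply_eq, mul_one]
    · intro k _ hk; rw [Matrix.one_apply_ne (Ne.symm hk), mul_zero, zero_mul]
    · intro h; exact absurd (Finset.mem_univ c) h
  have hfinal : Y c a * Y b d + f * pderiv ((a, b) : Fin n × Fin n) (Y c d) = Y c d * Y b a := by
    rw [← hL1, ← hL2, ← hR, ← h6, ← Finset.sum_add_distrib]
    exact Finset.sum_congr rfl fun i _ => by rw [mul_add]
  linear_combination hfinal

end

lemma update_succ_eq (k : ℕ) (j : Fin k) :
    Function.update (Fin.succ : Fin k → Fin (k + 1)) j 0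
      = (Fin.succ j).succAbove ∘ (Fin.cycleRange j) := by
  funext t
  rw [Function.comp_apply, Fin.succAbove_cycleRange]
  rcases eq_or_ne t j with rfl | h
  · rw [Function.update_self, Equiv.swap_apply_right]
  · rw [Function.update_of_ne h,
      Equiv.swap_apply_of_ne_of_ne (Fin.succ_ne_zero t) ((Fin.succ_injective _).ne h)]

lemma det_submatrix_update {A : Type*} [CommRing A] {k : ℕ}
    (W : Matrix (Fin k) (Fin (k + 1)) A) (j : Fin k) :
    (W.submatrix id (Function.update (Fin.succ : Fin k → Fin (k + 1)) j 0)).det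
      = (-1 : A) ^ (j : ℕ) * (W.submatrix id (Fin.succ j).succAbove).det := by
  rw [update_succ_eq]
  have : W.submatrix id ((Fin.succ j).succAbove ∘ (Fin.cycleRange j))
      = (W.submatrix id (Fin.succ j).succAbove).submatrix id (Fin.cycleRange j) := by
    rw [Matrix.submatrix_submatrix, Function.comp_id]
  rw [this, Matrix.det_permute' (Fin.cycleRange j), Fin.sign_cycleRange]
  norm_cast

section
variable {n : ℕ}

local notation "Rn" => MvPolynomial (Fin n × Fin n) ℚ

lemma neg_one_pow_self_mul (k : ℕ) (x : Rn) : (-1 : Rn) ^ k * ((-1 : Rn) ^ k * x) = x := by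
  rw [← mul_assoc, ← pow_add, Even.neg_one_pow ⟨k, by ring⟩, one_mul]

lemma crux (k : ℕ) (α β : Fin (k + 1) → Fin n) :
    ∑ u : Fin (k + 1), (-1 : Rn) ^ (u : ℕ) * ((genericMatrix n).det * pderiv (α 0, β u)
        (Matrix.det (Matrix.of fun i j : Fin k => (genericMatrix n).adjugate (β (u.succAbove i)) (α (Fin.succ j)))))
      = ((2 * k : ℕ) : Rn) *
          Matrix.det (Matrix.of fun i j : Fin (k + 1) => (genericMatrix n).adjugate (β i) (α j)) := by
  classical
  set A : Matrix (Fin (k + 1)) (Fin (k + 1)) Rn :=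
    Matrix.of fun i j => (genericMatrix n).adjugate (β i) (α j) with hA
  have hper : ∀ u : Fin (k + 1),
      (genericMatrix n).det * pderiv (α 0, β u)
          (Matrix.det (Matrix.of fun i j : Fin k => (genericMatrix n).adjugate (β (u.succAbove i)) (α (Fin.succ j))))
        = (k : Rn) * (A u 0 * (A.submatrix u.succAbove Fin.succ).det)
          - ∑ j : Fin k, (-1 : Rn) ^ (j : ℕ) *
              (A u (Fin.succ j) * (A.submatrix u.succAbove (Fin.succ j).succAbove).det) := by
    intro u
    have hM : (Matrix.of fun i j : Fin k => (genericMatrix n).adjugate (β (u.succAbove i)) (α (Fin.succ j)))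
        = A.submatrix u.succAbove Fin.succ := rfl
    set M : Matrix (Fin k) (Fin k) Rn := A.submatrix u.succAbove Fin.succ with hMdef
    rw [hM, derivation_det_col (pderiv (α 0, β u)) M, Finset.mul_sum]
    have hj : ∀ j : Fin k,
        (genericMatrix n).det * (M.updateCol j fun i => pderiv (α 0, β u) (M i j)).det
          = A u 0 * M.det - (-1 : Rn) ^ (j : ℕ) *
              (A u (Fin.succ j) * (A.submatrix u.succAbove (Fin.succ j).succAbove).det) := by
      intro j
      rw [← Matrix.det_updateCol_smul]
      have hcol : (genericMatrix n).det • (fun i => pderiv (α 0, β u) (M i j))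
          = (A u 0) • (fun i => M i j)
            + (-(A u (Fin.succ j))) • (fun i => A (u.succAbove i) 0) := by
        funext i
        simp only [Pi.add_apply, Pi.smul_apply, smul_eq_mul]
        have := f_mul_pderiv_adjugate (α 0) (β u) (β (u.succAbove i)) (α (Fin.succ j))
        calc (genericMatrix n).det * pderiv (α 0, β u) (M i j)
            = (genericMatrix n).adjugate (β u) (α 0) * (genericMatrix n).adjugate (β (u.succAbove i)) (α (Fin.succ j))
              - (genericMatrix n).adjugate (β (u.succAbove i)) (α 0) * (genericMatrix n).adjugate (β u) (α (Fin.succ j)) := this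
          _ = A u 0 * M i j + (-(A u (Fin.succ j))) * A (u.succAbove i) 0 := by
              simp only [hA, hMdef, Matrix.submatrix_apply, Matrix.of_apply]
              ring
      rw [hcol, Matrix.det_updateCol_add, Matrix.det_updateCol_smul,
        Matrix.det_updateCol_smul, Matrix.updateCol_eq_self]
      have hsub : M.updateCol j (fun i => A (u.succAbove i) 0)
          = (A.submatrix u.succAbove id).submatrix id
              (Function.update (Fin.succ : Fin k → Fin (k + 1)) j 0) := by
        ext i j'
        rcases eq_or_ne j' j with rfl | h
        · rw [Matrix.updateCol_self]
          simp [Function.update_self]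
        · rw [Matrix.updateCol_ne h]
          simp only [Matrix.submatrix_apply, Function.update_of_ne h, id_eq]
          rfl
      rw [hsub, det_submatrix_update]
      have hsub2 : (A.submatrix u.succAbove id).submatrix id (Fin.succ j).succAbove
          = A.submatrix u.succAbove (Fin.succ j).succAbove := by
        rw [Matrix.submatrix_submatrix, Function.comp_id, Function.id_comp]
      rw [hsub2]
      ring
    rw [Finset.sum_congr rfl fun j _ => hj j, Finset.sum_sub_distrib]
    rw [Finset.sum_const, Finset.card_univ, Fintype.card_fin]
    rw [nsmul_eq_mul]
  rw [Finset.sum_congr rfl fun u _ => congrArg _ (hper u)]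
  have hsplit : ∑ u : Fin (k + 1), (-1 : Rn) ^ (u : ℕ) *
      ((k : Rn) * (A u 0 * (A.submatrix u.succAbove Fin.succ).det)
        - ∑ j : Fin k, (-1 : Rn) ^ (j : ℕ) *
            (A u (Fin.succ j) * (A.submatrix u.succAbove (Fin.succ j).succAbove).det))
      = (k : Rn) * (∑ u : Fin (k + 1), (-1 : Rn) ^ (u : ℕ) *
            (A u 0 * (A.submatrix u.succAbove Fin.succ).det))
        - ∑ u : Fin (k + 1), ∑ j : Fin k, (-1 : Rn) ^ (u : ℕ) * ((-1 : Rn) ^ (j : ℕ) *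
            (A u (Fin.succ j) * (A.submatrix u.succAbove (Fin.succ j).succAbove).det)) := by
    rw [Finset.mul_sum, ← Finset.sum_sub_distrib]
    refine Finset.sum_congr rfl fun u _ => ?_
    rw [← Finset.mul_sum]
    ring
  rw [hsplit]
  have hcol0 : (∑ u : Fin (k + 1), (-1 : Rn) ^ (u : ℕ) *
      (A u 0 * (A.submatrix u.succAbove Fin.succ).det)) = A.det := by
    rw [Matrix.det_succ_column_zero]
    refine Finset.sum_congr rfl fun u _ => ?_
    ring
  have hcolj : ∀ j : Fin k, (∑ u : Fin (k + 1), (-1 : Rn) ^ (u : ℕ) *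
      (A u (Fin.succ j) * (A.submatrix u.succAbove (Fin.succ j).succAbove).det))
      = (-1 : Rn) ^ ((j : ℕ) + 1) * A.det := by
    intro j
    have h := Matrix.det_succ_column A (Fin.succ j)
    have hs : (-1 : Rn) ^ ((j : ℕ) + 1) * (-1 : Rn) ^ ((j : ℕ) + 1) = 1 := by
      rw [← pow_add]
      exact Even.neg_one_pow ⟨(j : ℕ) + 1, by ring⟩
    calc ∑ u : Fin (k + 1), (-1 : Rn) ^ (u : ℕ) *
          (A u (Fin.succ j) * (A.submatrix u.succAbove (Fin.succ j).succAbove).det)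
        = (-1 : Rn) ^ ((j : ℕ) + 1) *
            ∑ u : Fin (k + 1), (-1 : Rn) ^ ((u : ℕ) + (((Fin.succ j) : Fin (k+1)) : ℕ)) *
              A u (Fin.succ j) * (A.submatrix u.succAbove (Fin.succ j).succAbove).det := by
          rw [Finset.mul_sum]
          refine Finset.sum_congr rfl fun u _ => ?_
          rw [Fin.val_succ, pow_add]
          linear_combination (-((-1 : Rn) ^ (u : ℕ) *
            (A u (Fin.succ j) * (A.submatrix u.succAbove (Fin.succ j).succAbove).det))) * hs
      _ = (-1 : Rn) ^ ((j : ℕ) + 1) * A.det := by rw [← h]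
  rw [hcol0, Finset.sum_comm]
  have hinner : ∑ j : Fin k, ∑ u : Fin (k + 1), (-1 : Rn) ^ (u : ℕ) * ((-1 : Rn) ^ (j : ℕ) *
      (A u (Fin.succ j) * (A.submatrix u.succAbove (Fin.succ j).succAbove).det))
      = ∑ j : Fin k, (-(A.det)) := by
    refine Finset.sum_congr rfl fun j _ => ?_
    have : ∑ u : Fin (k + 1), (-1 : Rn) ^ (u : ℕ) * ((-1 : Rn) ^ (j : ℕ) *
        (A u (Fin.succ j) * (A.submatrix u.succAbove (Fin.succ j).succAbove).det))
        = (-1 : Rn) ^ (j : ℕ) * ∑ u : Fin (k + 1), (-1 : Rn) ^ (u : ℕ) *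
            (A u (Fin.succ j) * (A.submatrix u.succAbove (Fin.succ j).succAbove).det) := by
      rw [Finset.mul_sum]
      exact Finset.sum_congr rfl fun u _ => by ring
    have hs2 : (-1 : Rn) ^ (j : ℕ) * (-1 : Rn) ^ (j : ℕ) = 1 := by
      rw [← pow_add]
      exact Even.neg_one_pow ⟨(j : ℕ), by ring⟩
    rw [this, hcolj j, pow_add]
    linear_combination (-(A.det)) * hs2
  rw [hinner, Finset.sum_const, Finset.card_univ, Fintype.card_fin, nsmul_eq_mul]
  push_cast
  ring
end

section
variable {n : ℕ}
local notation "Rn" => MvPolynomial (Fin n × Fin n) ℚ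

lemma psiC (q : ℚ) (x p : Rn) :
    psiAlg n (C q * x) p = C q * psiAlg n x p := by
  rw [← smul_eq_C_mul, _root_.map_smul, LinearMap.smul_apply, smul_eq_C_mul]

lemma psiInt (m : ℤ) (x p : Rn) :
    psiAlg n ((m : Rn) * x) p = (m : Rn) * psiAlg n x p := by
  rw [← zsmul_eq_mul, map_zsmul, LinearMap.smul_apply, zsmul_eq_mul]

lemma psiXmul (q : Fin n × Fin n) (x p : Rn) :
    psiAlg n (X q * x) p = pderiv q (psiAlg n x p) := by
  rw [_root_.map_mul, Module.End.mul_apply, psiAlg_X]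
  rfl

lemma cayley_main (s : ℕ) (hs : 1 ≤ s) :
    ∀ (k : ℕ) (α β : Fin k → Fin n),
      (genericMatrix n).det ^ k *
          psiAlg n (Matrix.det (Matrix.of fun i j : Fin k => X (α i, β j)))
            ((genericMatrix n).det ^ s)
        = C ((ascPochhammer ℚ k).eval (s : ℚ)) *
            (Matrix.det (Matrix.of fun i j : Fin k =>
                (genericMatrix n).adjugate (β i) (α j)) *
              (genericMatrix n).det ^ s)
  | 0 => by
    intro α β
    have h1 : (Matrix.of fun i j : Fin 0 => X (α i, β j)).det = (1 : Rn) :=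
      Matrix.det_fin_zero
    have h2 : (Matrix.of fun i j : Fin 0 =>
        (genericMatrix n).adjugate (β i) (α j)).det = (1 : Rn) := Matrix.det_fin_zero
    rw [h1, h2, _root_.map_one, pow_zero, one_mul, one_mul, ascPochhammer_zero,
      Polynomial.eval_one, _root_.map_one, one_mul]
    rfl
  | (k + 1) => by
    intro α β
    have ih := cayley_main s hs k
    set f : Rn := (genericMatrix n).det with hf
    set Y := (genericMatrix n).adjugate with hY
    set A : Matrix (Fin (k + 1)) (Fin (k + 1)) Rn :=
      Matrix.of fun i j => Y (β i) (α j) with hA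
    set P : ℚ := (ascPochhammer ℚ k).eval (s : ℚ) with hP
    set N : Fin (k + 1) → Rn := fun u =>
      Matrix.det (Matrix.of fun i j : Fin k => Y (β (u.succAbove i)) (α (Fin.succ j))) with hN
    set g : Fin (k + 1) → Rn := fun u =>
      psiAlg n (Matrix.det (Matrix.of fun i j : Fin k =>
        X (α (Fin.succ i), β (u.succAbove j)))) (f ^ s) with hg
    have hfs : f * f ^ (s - 1) = f ^ s := by
      rw [← pow_succ']
      congr 1
      omega
    have hB : (Matrix.det (Matrix.of fun i j : Fin (k + 1) => X (α i, β j)))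
        = ∑ u : Fin (k + 1), (-1 : Rn) ^ (u : ℕ) * (X (α 0, β u) *
            Matrix.det (Matrix.of fun i j : Fin k =>
              X (α (Fin.succ i), β (u.succAbove j)))) := by
      rw [Matrix.det_succ_row_zero]
      refine Finset.sum_congr rfl fun u _ => ?_
      rw [mul_assoc]
      rfl
    have happ : psiAlg n (Matrix.det (Matrix.of fun i j : Fin (k + 1) => X (α i, β j))) (f ^ s)
        = ∑ u : Fin (k + 1), (-1 : Rn) ^ (u : ℕ) * pderiv (α 0, β u) (g u) := by
      rw [hB, map_sum, LinearMap.sum_apply]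
      refine Finset.sum_congr rfl fun u _ => ?_
      have hcast : ((-1 : Rn)) ^ (u : ℕ) = (((-1) ^ (u : ℕ) : ℤ) : Rn) := by push_cast; ring
      rw [hcast, psiInt, psiXmul]
    have hTu : ∀ u : Fin (k + 1),
        f ^ (k + 1) * ((-1 : Rn) ^ (u : ℕ) * pderiv (α 0, β u) (g u))
          = (-1 : Rn) ^ (u : ℕ) * (C P * ((f * pderiv (α 0, β u) (N u)) * f ^ s))
            + (-1 : Rn) ^ (u : ℕ) *
              (C P * (((s : Rn) - (k : Rn)) * (A u 0 * (N u * f ^ s)))) := by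
      intro u
      have ihu : f ^ k * g u = C P * (N u * f ^ s) :=
        ih (fun i => α (Fin.succ i)) (fun j => β (u.succAbove j))
      have hd := congrArg (pderiv ((α 0, β u) : Fin n × Fin n)) ihu
      rw [pderiv_mul, pderiv_C_mul, pderiv_mul] at hd
      have hdfk : pderiv ((α 0, β u) : Fin n × Fin n) (f ^ k)
          = (k : Rn) * f ^ (k - 1) * A u 0 := by
        rw [hf, pderiv_pow, pderiv_det_generic]
        rfl
      have hdfs : pderiv ((α 0, β u) : Fin n × Fin n) (f ^ s)
          = (s : Rn) * f ^ (s - 1) * A u 0 := by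
        rw [hf, pderiv_pow, pderiv_det_generic]
        rfl
      rw [hdfk, hdfs] at hd
      have hffk : (k : Rn) * (f * f ^ (k - 1)) = (k : Rn) * f ^ k := by
        cases k with
        | zero => simp
        | succ m =>
          rw [Nat.add_sub_cancel, ← pow_succ']
      linear_combination ((-1 : Rn) ^ (u : ℕ) * f) * hd
        - ((-1 : Rn) ^ (u : ℕ) * A u 0 * g u) * hffk
        - ((-1 : Rn) ^ (u : ℕ) * (k : Rn) * A u 0) * ihu
        + ((-1 : Rn) ^ (u : ℕ) * C P * N u * (s : Rn) * A u 0) * hfs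
    have hcrux : ∑ u : Fin (k + 1), (-1 : Rn) ^ (u : ℕ) * (f * pderiv (α 0, β u) (N u))
        = ((2 * k : ℕ) : Rn) * A.det := crux k α β
    have hcol0 : ∑ u : Fin (k + 1), (-1 : Rn) ^ (u : ℕ) * (A u 0 * N u) = A.det := by
      rw [Matrix.det_succ_column_zero]
      refine Finset.sum_congr rfl fun u _ => ?_
      have : N u = (A.submatrix u.succAbove Fin.succ).det := rfl
      rw [this]
      ring
    rw [happ, Finset.mul_sum, Finset.sum_congr rfl fun u _ => hTu u, Finset.sum_add_distrib]
    have e1 : ∑ u : Fin (k + 1), (-1 : Rn) ^ (u : ℕ) *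
        (C P * ((f * pderiv (α 0, β u) (N u)) * f ^ s))
        = C P * ((((2 * k : ℕ) : Rn) * A.det) * f ^ s) := by
      rw [← hcrux, Finset.sum_mul, Finset.mul_sum]
      refine Finset.sum_congr rfl fun u _ => ?_
      ring
    have e2 : ∑ u : Fin (k + 1), (-1 : Rn) ^ (u : ℕ) *
        (C P * (((s : Rn) - (k : Rn)) * (A u 0 * (N u * f ^ s))))
        = C P * (((s : Rn) - (k : Rn)) * (A.det * f ^ s)) := by
      rw [← hcol0, Finset.sum_mul, Finset.mul_sum]
      rw [Finset.mul_sum]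
      refine Finset.sum_congr rfl fun u _ => ?_
      ring
    rw [e1, e2]
    have hpoch : C ((ascPochhammer ℚ (k + 1)).eval (s : ℚ))
        = C P * ((s : Rn) + (k : Rn)) := by
      rw [ascPochhammer_succ_eval, _root_.map_mul]
      congr 1
      rw [map_add, map_natCast, map_natCast]
    rw [hpoch]
    push_cast
    ring
end

/-- Cayley's identity: `det(∂) (det X)^s = s(s+1)⋯(s+n−1) · (det X)^{s−1}`. -/
theorem cayley_identity (n s : ℕ) (hn : 1 ≤ n) (hs : 1 ≤ s) :
    detDeriv n ((genericMatrix n).det ^ s) =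
      ((ascPochhammer ℚ n).eval (s : ℚ)) • (genericMatrix n).det ^ (s - 1) := by
  have hf0 : (genericMatrix n).det ≠ 0 := by
    intro h
    have h2 := congrArg (eval fun p : Fin n × Fin n => if p.1 = p.2 then (1 : ℚ) else 0) h
    rw [map_zero, ← RingHom.coe_coe, RingHom.map_det, RingHom.mapMatrix_apply] at h2
    have h3 : (genericMatrix n).map (eval fun p : Fin n × Fin n =>
        if p.1 = p.2 then (1 : ℚ) else 0) = (1 : Matrix (Fin n) (Fin n) ℚ) := by
      ext i j
      rw [Matrix.map_apply]
      show eval _ (X (i, j)) = _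
      rw [eval_X]
      by_cases hij : i = j
      · subst hij
        simp [Matrix.one_apply_eq]
      · simp [Matrix.one_apply_ne hij, hij]
    erw [h3, Matrix.det_one] at h2
    exact one_ne_zero h2
  have key : (genericMatrix n).det ^ n *
        psiAlg n (genericMatrix n).det ((genericMatrix n).det ^ s)
      = C ((ascPochhammer ℚ n).eval (s : ℚ)) *
          (((genericMatrix n).adjugate).det * (genericMatrix n).det ^ s) :=
    cayley_main s hs n (fun i => i) (fun j => j)
  rw [detDeriv_eq n]
  apply mul_left_cancel₀ (pow_ne_zero n hf0)
  rw [key, Matrix.det_adjugate, Fintype.card_fin, smul_eq_C_mul]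
  have hpow : (genericMatrix n).det ^ (n - 1) * (genericMatrix n).det ^ s
      = (genericMatrix n).det ^ n * (genericMatrix n).det ^ (s - 1) := by
    rw [← pow_add, ← pow_add]
    congr 1
    omega
  linear_combination (C ((ascPochhammer ℚ n).eval (s : ℚ))) * hpow
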